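/- For 0 < φ ≤ β ≤ 1, the integral from 0 to 1 of log2((φ⁻¹ - z)/(βφ⁻¹ - z)) dz equals H(φ)/φ - (β/φ)·H(φ/β), where H is the binary entropy function. -/

import Mathlib

open Real MeasureTheory

noncomputable def binEnt (p : ℝ) : ℝ :=
  -(p * Real.logb 2 p) - (1 - p) * Real.logb 2 (1 - p)

lemma log_intInt01 : IntervalIntegrable Real.log volume 0 1 := by
  rw [intervalIntegrable_iff_integrableOn_Ioc_of_le zero_le_one]
  have hb : IntegrableOn (fun x : ℝ => 2 * x ^ (-(1/2) : ℝ)) (Set.Ioc 0 1) volume := by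
    have h := (intervalIntegral.intervalIntegrable_rpow' (by norm_num : (-1:ℝ) < -(1/2))
      : IntervalIntegrable (fun x : ℝ => x ^ (-(1/2) : ℝ)) volume 0 1)
    rw [intervalIntegrable_iff_integrableOn_Ioc_of_le zero_le_one] at h
    exact h.const_mul 2
  apply hb.mono' Real.measurable_log.aestronglyMeasurable
  filter_upwards [ae_restrict_mem measurableSet_Ioc] with x hx
  have hx0 : 0 < x := hx.1
  have h1 : Real.log (x ^ (-(1/2) : ℝ)) = (-(1/2)) * Real.log x := Real.log_rpow hx0 _
  have h2 : Real.log (x ^ (-(1/2) : ℝ)) ≤ x ^ (-(1/2) : ℝ) - 1 :=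
    Real.log_le_sub_one_of_pos (Real.rpow_pos_of_pos hx0 _)
  have hlog : Real.log x ≤ 0 := Real.log_nonpos hx0.le hx.2
  have : ‖Real.log x‖ = -Real.log x := by
    rw [Real.norm_eq_abs, abs_of_nonpos hlog]
  rw [this]
  nlinarith [Real.rpow_pos_of_pos hx0 (-(1/2) : ℝ)]

lemma intA (a : ℝ) (ha : 1 ≤ a) :
    IntervalIntegrable (fun z => Real.log (a - z)) volume 0 1 := by
  have h : IntervalIntegrable Real.log volume (a - 1) a := by
    rcases eq_or_lt_of_le ha with h1 | h1
    · simpa [← h1] using log_intInt01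
    · exact intervalIntegral.intervalIntegrable_log (Set.notMem_uIcc_of_lt (by linarith) (by linarith))
  simpa using h.symm.comp_sub_left a

lemma intB (a : ℝ) (ha : 1 ≤ a) :
    ∫ z in (0:ℝ)..1, Real.log (a - z)
      = a * Real.log a - (a - 1) * Real.log (a - 1) - 1 := by
  have hFTC := intervalIntegral.integral_eq_sub_of_hasDeriv_right_of_le
    (f := fun z => -((a - z) * Real.log (a - z)) - z)
    (f' := fun z => Real.log (a - z)) zero_le_one
    (by
      apply Continuous.continuousOn
      exact ((Real.continuous_mul_log.comp (continuous_const.sub continuous_id)).neg).sub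
        continuous_id)
    (by
      intro x hx
      have hax : 0 < a - x := by linarith [hx.2]
      have h1 : HasDerivAt (fun z : ℝ => a - z) (-1) x := (hasDerivAt_id x).const_sub a
      have h2 : HasDerivAt Real.log (a - x)⁻¹ (a - x) := Real.hasDerivAt_log hax.ne'
      have h3 : HasDerivAt (fun z => Real.log (a - z)) ((a - x)⁻¹ * (-1)) x := h2.comp x h1
      have h4 : HasDerivAt (fun z => (a - z) * Real.log (a - z))
          ((-1) * Real.log (a - x) + (a - x) * ((a - x)⁻¹ * (-1))) x := h1.mul h3
      have h5 := (h4.neg.sub (hasDerivAt_id x))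
      have heq : -((-1) * Real.log (a - x) + (a - x) * ((a - x)⁻¹ * (-1))) - 1
          = Real.log (a - x) := by field_simp; ring
      rw [heq] at h5
      exact h5.hasDerivWithinAt)
    (intA a ha)
  rw [hFTC]
  simp only [sub_zero, mul_comm]
  ring

lemma key (c : ℝ) (hc : 0 < c) (hc1 : c ≤ 1) :
    c⁻¹ * Real.log c⁻¹ - (c⁻¹ - 1) * Real.log (c⁻¹ - 1)
      = (-(c * Real.log c) - (1 - c) * Real.log (1 - c)) / c := by
  rcases eq_or_lt_of_le hc1 with h | h
  · subst h; simp
  · have h1 : c⁻¹ - 1 = (1 - c) / c := by field_simp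
    rw [h1, Real.log_div (by linarith) hc.ne', Real.log_inv]
    field_simp
    ring

theorem binary_entropy_loss (φ β : ℝ) (hφ : 0 < φ) (hφβ : φ ≤ β) (hβ : β ≤ 1) :
    ∫ z in (0:ℝ)..1, Real.logb 2 ((φ⁻¹ - z) / (β * φ⁻¹ - z))
      = binEnt φ / φ - (β / φ) * binEnt (φ / β) := by
  have hβ0 : 0 < β := lt_of_lt_of_le hφ hφβ
  have hφ1 : φ ≤ 1 := hφβ.trans hβ
  have ha1 : 1 ≤ φ⁻¹ := one_le_inv_iff₀.2 ⟨hφ, hφ1⟩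
  have hb1 : 1 ≤ β * φ⁻¹ := by
    rw [← div_eq_mul_inv]
    exact (one_le_div hφ).2 hφβ
  have hl2 : Real.log 2 ≠ 0 := (Real.log_pos (by norm_num)).ne'
  have hcong : ∫ z in (0:ℝ)..1, Real.logb 2 ((φ⁻¹ - z) / (β * φ⁻¹ - z))
      = ∫ z in (0:ℝ)..1, (Real.log (φ⁻¹ - z) - Real.log (β * φ⁻¹ - z)) / Real.log 2 := by
    apply intervalIntegral.integral_congr_ae
    have hne : ∀ᵐ x : ℝ, x ≠ (1:ℝ) := by
      rw [ae_iff]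
      simp only [ne_eq, not_not, Set.setOf_eq_eq_singleton]
      exact Real.volume_singleton
    filter_upwards [hne] with x hx hxI
    rw [Set.uIoc_of_le zero_le_one] at hxI
    have hx1 : x < 1 := lt_of_le_of_ne hxI.2 hx
    have hp : 0 < φ⁻¹ - x := by linarith
    have hq : 0 < β * φ⁻¹ - x := by linarith
    rw [Real.logb, Real.log_div hp.ne' hq.ne']
  rw [hcong, intervalIntegral.integral_div,
    intervalIntegral.integral_sub (intA _ ha1) (intA _ hb1), intB _ ha1, intB _ hb1]
  have k1 := key φ hφ hφ1
  have k2 := key (φ / β) (div_pos hφ hβ0) ((div_le_one hβ0).2 hφβ)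
  have hc : (φ / β)⁻¹ = β * φ⁻¹ := by rw [inv_div, div_eq_mul_inv]
  rw [hc] at k2
  rw [show binEnt φ = (-(φ * Real.log φ) - (1 - φ) * Real.log (1 - φ)) / Real.log 2 by
      simp only [binEnt, Real.logb]; ring,
    show binEnt (φ / β)
        = (-((φ/β) * Real.log (φ/β)) - (1 - φ/β) * Real.log (1 - φ/β)) / Real.log 2 by
      simp only [binEnt, Real.logb]; ring,
    k1, k2]
  have hφβ0 : (0:ℝ) < φ / β := div_pos hφ hβ0
  field_simp
  ring
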